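/- Let ρ be a positive definite operator and V an operator on a finite-dimensional complex Hilbert space, and let γ⁺, γ⁻ > 0. If (γ⁺)^{1/2} ρ^{1/2} V = (γ⁻)^{1/2} V ρ^{1/2}, then ρ commutes with V*V and with VV*. -/

import Mathlib

open Matrix ComplexOrder

/-- The square root of a positive semidefinite matrix, as `Matrix.PosSemidef.sqrt` was defined
in the older Mathlib (since removed). -/
noncomputable def posSemidefSqrt {n : Type*} [Fintype n] [DecidableEq n] {A : Matrix n n ℂ}
    (hA : A.PosSemidef) : Matrix n n ℂ :=
  hA.1.eigenvectorUnitary.1 * diagonal ((↑) ∘ (√·) ∘ hA.1.eigenvalues) *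
    (star hA.1.eigenvectorUnitary : Matrix n n ℂ)

/-- If ρ is positive definite, γ⁺, γ⁻ > 0, and
(γ⁺)^{1/2} ρ^{1/2} V = (γ⁻)^{1/2} V ρ^{1/2}, then ρ commutes with V*V and with VV*. -/
theorem commutes_of_sqrt_intertwining (d : ℕ) (ρ : Matrix (Fin d) (Fin d) ℂ)
    (hρ : ρ.PosDef) (V : Matrix (Fin d) (Fin d) ℂ)
    (γp γm : ℝ) (hγp : 0 < γp) (hγm : 0 < γm)
    (h : (Real.sqrt γp : ℂ) • (posSemidefSqrt hρ.posSemidef * V)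
        = (Real.sqrt γm : ℂ) • (V * posSemidefSqrt hρ.posSemidef)) :
    ρ * (Vᴴ * V) = (Vᴴ * V) * ρ ∧ ρ * (V * Vᴴ) = (V * Vᴴ) * ρ := by
  set S := posSemidefSqrt hρ.posSemidef with hSdef
  have hS2 : S * S = ρ := by
    have hsp := hρ.posSemidef.1.spectral_theorem
    rw [Unitary.conjStarAlgAut_apply] at hsp
    have hU := Unitary.coe_star_mul_self hρ.posSemidef.1.eigenvectorUnitary
    conv_rhs => rw [hsp]
    simp only [hSdef, posSemidefSqrt, mul_assoc]
    rw [← mul_assoc _ (hρ.posSemidef.1.eigenvectorUnitary : Matrix (Fin d) (Fin d) ℂ), hU, one_mul,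
      ← mul_assoc (diagonal _), diagonal_mul_diagonal]
    congr 3
    funext i
    simp only [Function.comp_apply]
    rw [← Complex.ofReal_mul, Real.mul_self_sqrt (hρ.posSemidef.eigenvalues_nonneg i)]
    rfl
  have hSH : Sᴴ = S := by
    simp only [hSdef, posSemidefSqrt, conjTranspose_mul, diagonal_conjTranspose, mul_assoc]
    have hst : star (Complex.ofReal ∘ (fun x : ℝ => √x) ∘ hρ.posSemidef.1.eigenvalues)
        = Complex.ofReal ∘ (fun x : ℝ => √x) ∘ hρ.posSemidef.1.eigenvalues := by
      funext i
      simp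
    simp only [Matrix.star_eq_conjTranspose, hst, conjTranspose_conjTranspose]
  set a : ℂ := (Real.sqrt γp : ℂ) with hadef
  set b : ℂ := (Real.sqrt γm : ℂ) with hbdef
  have ha : a ≠ 0 := by
    simp only [hadef, ne_eq, Complex.ofReal_eq_zero]
    exact ne_of_gt (Real.sqrt_pos.mpr hγp)
  have hb : b ≠ 0 := by
    simp only [hbdef, ne_eq, Complex.ofReal_eq_zero]
    exact ne_of_gt (Real.sqrt_pos.mpr hγm)
  set c : ℂ := b / a with hcdef
  have hc : c ≠ 0 := div_ne_zero hb ha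
  have h1 : S * V = c • (V * S) := by
    have := congrArg (fun M => a⁻¹ • M) h
    simpa [smul_smul, inv_mul_cancel₀ ha, hcdef, div_eq_inv_mul] using this
  have hstarc : star c = c := by
    simp [hcdef, hadef, hbdef, div_eq_mul_inv]
  have h2 : Vᴴ * S = c • (S * Vᴴ) := by
    have := congrArg Matrix.conjTranspose h1
    simpa [Matrix.conjTranspose_mul, Matrix.conjTranspose_smul, hSH, hstarc] using this
  have h2' : S * Vᴴ = c⁻¹ • (Vᴴ * S) := by
    rw [h2, smul_smul, inv_mul_cancel₀ hc, one_smul]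
  have H1 : ∀ X : Matrix (Fin d) (Fin d) ℂ, S * (V * X) = c • (V * (S * X)) := by
    intro X
    rw [← mul_assoc, h1, smul_mul_assoc, mul_assoc]
  have H2 : ∀ X : Matrix (Fin d) (Fin d) ℂ, S * (Vᴴ * X) = c⁻¹ • (Vᴴ * (S * X)) := by
    intro X
    rw [← mul_assoc, h2', smul_mul_assoc, mul_assoc]
  constructor
  · rw [← hS2]
    simp only [mul_assoc]
    simp only [H1, H2, h1, h2', mul_smul_comm, smul_smul]
    simp [inv_mul_cancel₀ hc]
  · rw [← hS2]
    simp only [mul_assoc]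
    simp only [H1, H2, h1, h2', mul_smul_comm, smul_smul]
    simp [mul_inv_cancel₀ hc]
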